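/- Consider the surface metric dr² + ρ(r)² dθ² on (0,1) × S¹ with ρ(r) = 2 + r⁵ sin(1/r). Then the quantity -ρ''(r)/ρ(r) (the sectional curvature) is bounded in absolute value by 12 on (0,1), while the quantity ρ'(r)ρ''(r) - ρ(r)ρ'''(r) is unbounded as r → 0⁺. -/

import Mathlib

noncomputable def ρ : ℝ → ℝ := fun r => 2 + r ^ 5 * Real.sin (1 / r)

noncomputable def g1 : ℝ → ℝ := fun r => 5 * r ^ 4 * Real.sin (1/r) - r ^ 3 * Real.cos (1/r)
noncomputable def g2 : ℝ → ℝ := fun r => 20 * r ^ 3 * Real.sin (1/r) - 8 * r ^ 2 * Real.cos (1/r) - r * Real.sin (1/r)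
noncomputable def g3 : ℝ → ℝ := fun r => 60 * r ^ 2 * Real.sin (1/r) - 36 * r * Real.cos (1/r) - 9 * Real.sin (1/r) + Real.cos (1/r) / r

lemma hs' {r : ℝ} (hr : r ≠ 0) :
    HasDerivAt (fun x : ℝ => Real.sin (1/x)) (Real.cos (1/r) * (-(r ^ 2)⁻¹)) r := by
  have h1 : HasDerivAt (fun x : ℝ => 1/x) (-(r ^ 2)⁻¹) r := by
    simpa [one_div] using hasDerivAt_inv hr
  simpa [mul_comm] using h1.sin

lemma hc' {r : ℝ} (hr : r ≠ 0) :
    HasDerivAt (fun x : ℝ => Real.cos (1/x)) (-Real.sin (1/r) * (-(r ^ 2)⁻¹)) r := by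
  have h1 : HasDerivAt (fun x : ℝ => 1/x) (-(r ^ 2)⁻¹) r := by
    simpa [one_div] using hasDerivAt_inv hr
  simpa [mul_comm] using h1.cos

lemma hd1 {r : ℝ} (hr : r ≠ 0) : HasDerivAt ρ (g1 r) r := by
  have h := ((hasDerivAt_pow 5 r).mul (hs' hr)).const_add 2
  refine h.congr_deriv ?_
  unfold g1; field_simp; ring

lemma hd2 {r : ℝ} (hr : r ≠ 0) : HasDerivAt g1 (g2 r) r := by
  have h := (((hasDerivAt_pow 4 r).const_mul (5:ℝ)).mul (hs' hr)).sub
    ((hasDerivAt_pow 3 r).mul (hc' hr))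
  refine h.congr_deriv ?_
  unfold g2; field_simp; ring

lemma hd3 {r : ℝ} (hr : r ≠ 0) : HasDerivAt g2 (g3 r) r := by
  have h := ((((hasDerivAt_pow 3 r).const_mul (20:ℝ)).mul (hs' hr)).sub
    (((hasDerivAt_pow 2 r).const_mul (8:ℝ)).mul (hc' hr))).sub
    ((hasDerivAt_id r).mul (hs' hr))
  refine h.congr_deriv ?_
  unfold g3 id; field_simp; ring

lemma deriv_rho {r : ℝ} (hr : r ≠ 0) : deriv ρ r = g1 r := (hd1 hr).deriv

lemma ev_ne {r : ℝ} (hr : r ≠ 0) {f g : ℝ → ℝ} (h : ∀ x : ℝ, x ≠ 0 → f x = g x) :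
    f =ᶠ[nhds r] g := by
  filter_upwards [isOpen_compl_singleton.mem_nhds (by simpa using hr)] with x hx
  exact h x (by simpa using hx)

lemma iter2_rho {r : ℝ} (hr : r ≠ 0) : iteratedDeriv 2 ρ r = g2 r := by
  have h1 : deriv ρ =ᶠ[nhds r] g1 := ev_ne hr fun x hx => deriv_rho hx
  rw [iteratedDeriv_succ, iteratedDeriv_one, h1.deriv_eq, (hd2 hr).deriv]

lemma iter3_rho {r : ℝ} (hr : r ≠ 0) : iteratedDeriv 3 ρ r = g3 r := by
  have h2 : iteratedDeriv 2 ρ =ᶠ[nhds r] g2 := ev_ne hr fun x hx => iter2_rho hx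
  rw [iteratedDeriv_succ, h2.deriv_eq, (hd3 hr).deriv]

set_option maxHeartbeats 1600000 in
/-- For the rotationally symmetric metric `dr² + ρ(r)²dθ²` with
`ρ(r) = 2 + r⁵ sin(1/r)`: the sectional curvature `-ρ''/ρ` is bounded by `12` in
absolute value on `(0,1)`, while `ρ'ρ'' - ρρ'''` is unbounded as `r → 0⁺`. -/
theorem bounded_zeroth_unbounded_first :
    (∀ r ∈ Set.Ioo (0 : ℝ) 1, |(-(iteratedDeriv 2 ρ r) / ρ r)| ≤ 12) ∧
      (∀ ε > (0 : ℝ), ¬ BddAbove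
        ((fun r => |deriv ρ r * iteratedDeriv 2 ρ r - ρ r * iteratedDeriv 3 ρ r|) ''
          Set.Ioo 0 ε)) := by
  constructor
  · rintro r ⟨hr0, hr1⟩
    have hrne : r ≠ 0 := ne_of_gt hr0
    rw [iter2_rho hrne]
    have hs1 : -1 ≤ Real.sin (1/r) := Real.neg_one_le_sin _
    have hs2 : Real.sin (1/r) ≤ 1 := Real.sin_le_one _
    have hc1 : -1 ≤ Real.cos (1/r) := Real.neg_one_le_cos _
    have hc2 : Real.cos (1/r) ≤ 1 := Real.cos_le_one _
    have h5le : r ^ 5 ≤ 1 := pow_le_one₀ hr0.le hr1.le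
    have h5pos : (0:ℝ) ≤ r ^ 5 := by positivity
    have hρ : ρ r = 2 + r ^ 5 * Real.sin (1/r) := rfl
    have hρ1 : (1:ℝ) ≤ ρ r := by
      rw [hρ]; nlinarith [mul_nonneg h5pos (by linarith : (0:ℝ) ≤ 1 + Real.sin (1/r))]
    have hρ0 : (0:ℝ) < ρ r := by linarith
    rw [abs_div, abs_neg, abs_of_pos hρ0, div_le_iff₀ hρ0]
    have hg : g2 r = 20 * r ^ 3 * Real.sin (1/r) - 8 * r ^ 2 * Real.cos (1/r)
        - r * Real.sin (1/r) := rfl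
    rw [hg, hρ]
    have h2p : (0:ℝ) ≤ r ^ 2 := by positivity
    have h3p : (0:ℝ) ≤ r ^ 3 := by positivity
    rcases le_or_gt r (13/20) with h | h
    · have h2b : r ^ 2 ≤ (13/20:ℝ) ^ 2 := pow_le_pow_left₀ hr0.le h 2
      have h3b : r ^ 3 ≤ (13/20:ℝ) ^ 3 := pow_le_pow_left₀ hr0.le h 3
      have h5b : r ^ 5 ≤ (13/20:ℝ) ^ 5 := pow_le_pow_left₀ hr0.le h 5
      rw [abs_le]
      constructor
      · nlinarith [mul_nonneg h3p (by linarith : (0:ℝ) ≤ 1 + Real.sin (1/r)),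
          mul_nonneg h2p (by linarith : (0:ℝ) ≤ 1 - Real.cos (1/r)),
          mul_nonneg hr0.le (by linarith : (0:ℝ) ≤ 1 - Real.sin (1/r)),
          mul_nonneg h5pos (by linarith : (0:ℝ) ≤ 1 - Real.sin (1/r))]
      · nlinarith [mul_nonneg h3p (by linarith : (0:ℝ) ≤ 1 - Real.sin (1/r)),
          mul_nonneg h2p (by linarith : (0:ℝ) ≤ 1 + Real.cos (1/r)),
          mul_nonneg hr0.le (by linarith : (0:ℝ) ≤ 1 + Real.sin (1/r)),
          mul_nonneg h5pos (by linarith : (0:ℝ) ≤ 1 + Real.sin (1/r))]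
    · have hπ := Real.pi_gt_d6
      have hinv : 1/r ≤ 20/13 := by
        rw [div_le_div_iff₀ hr0 (by norm_num : (0:ℝ) < 13)]; linarith
      have hinv0 : (0:ℝ) ≤ 1/r := by positivity
      have hsn : 0 ≤ Real.sin (1/r) :=
        Real.sin_nonneg_of_nonneg_of_le_pi hinv0 (by linarith)
      have hcn : 0 ≤ Real.cos (1/r) :=
        Real.cos_nonneg_of_mem_Icc ⟨by linarith, by linarith⟩
      have h20 : (0:ℝ) ≤ 20 * r ^ 3 - r := by nlinarith
      have h3le : r ^ 3 ≤ 1 := pow_le_one₀ hr0.le hr1.le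
      have h2le : r ^ 2 ≤ 1 := pow_le_one₀ hr0.le hr1.le
      rw [abs_le]
      constructor
      · nlinarith [mul_nonneg h20 hsn, mul_nonneg h5pos hsn,
          mul_le_mul_of_nonneg_left hc2 h2p]
      · nlinarith [mul_nonneg h20 (by linarith : (0:ℝ) ≤ 1 - Real.sin (1/r)),
          mul_nonneg h2p hcn, mul_nonneg h5pos hsn]
  · intro ε hε hB
    obtain ⟨M, hM⟩ := hB
    obtain ⟨n, hn⟩ := exists_nat_gt (max (max ((M+80)/(4*Real.pi)) (1/(2*Real.pi*ε))) 1)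
    have hπ : (0:ℝ) < Real.pi := Real.pi_pos
    have hn1 : (1:ℝ) ≤ n := le_of_lt (max_lt_iff.1 hn).2
    have hD : (0:ℝ) < 2 * Real.pi * n := by nlinarith
    set r : ℝ := (2 * Real.pi * n)⁻¹ with hrdef
    have hr0 : 0 < r := inv_pos.2 hD
    obtain ⟨hAB, -⟩ := max_lt_iff.1 hn
    obtain ⟨hnA, hnB⟩ := max_lt_iff.1 hAB
    have hεinv : ε⁻¹ < 2 * Real.pi * n := by
      have hmul := mul_lt_mul_of_pos_right hnB (show (0:ℝ) < 2*Real.pi by positivity)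
      have he : (1:ℝ)/(2*Real.pi*ε) * (2*Real.pi) = ε⁻¹ := by
        field_simp
      rw [← he]; linarith
    have hrε : r < ε := by
      rw [hrdef, inv_lt_comm₀ hD hε]; exact hεinv
    have hrlt1 : r < 1 := by
      rw [hrdef, inv_lt_comm₀ hD one_pos, inv_one]; nlinarith [Real.pi_gt_three]
    have h1r : 1/r = 2 * Real.pi * n := by rw [hrdef, one_div, inv_inv]
    have hsin : Real.sin (1/r) = 0 := by
      rw [h1r, show 2 * Real.pi * (n:ℝ) = ((2*n : ℕ) : ℝ) * Real.pi by push_cast; ring]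
      exact Real.sin_nat_mul_pi (2*n)
    have hcos : Real.cos (1/r) = 1 := by
      rw [h1r, show 2 * Real.pi * (n:ℝ) = (n:ℝ) * (2 * Real.pi) by ring]
      exact Real.cos_nat_mul_two_pi n
    have hρr : ρ r = 2 := by rw [show ρ r = 2 + r ^ 5 * Real.sin (1/r) from rfl, hsin]; ring
    have hd : deriv ρ r = -r ^ 3 := by
      rw [deriv_rho hr0.ne', show g1 r = 5 * r ^ 4 * Real.sin (1/r) - r ^ 3 * Real.cos (1/r)
        from rfl, hsin, hcos]; ring
    have h2 : iteratedDeriv 2 ρ r = -(8 * r ^ 2) := by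
      rw [iter2_rho hr0.ne', show g2 r = 20 * r ^ 3 * Real.sin (1/r)
        - 8 * r ^ 2 * Real.cos (1/r) - r * Real.sin (1/r) from rfl, hsin, hcos]; ring
    have h3 : iteratedDeriv 3 ρ r = -(36 * r) + 2 * Real.pi * n := by
      rw [iter3_rho hr0.ne', show g3 r = 60 * r ^ 2 * Real.sin (1/r)
        - 36 * r * Real.cos (1/r) - 9 * Real.sin (1/r) + Real.cos (1/r) / r from rfl,
        hsin, hcos, ← h1r]; ring
    have hle := hM (Set.mem_image_of_mem _ (⟨hr0, hrε⟩ : r ∈ Set.Ioo 0 ε))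
    rw [hd, h2, hρr, h3] at hle
    have habs := neg_le_abs (-r ^ 3 * -(8 * r ^ 2) - 2 * (-(36 * r) + 2 * Real.pi * n))
    have h5le : r ^ 5 ≤ 1 := pow_le_one₀ hr0.le hrlt1.le
    have hMn : M + 80 < 4 * Real.pi * n := by
      have := (div_lt_iff₀ (by positivity : (0:ℝ) < 4 * Real.pi)).1 hnA
      nlinarith
    nlinarith [hle, habs]
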